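/- Let E be a finite-dimensional real normed space, C ⊆ E a closed convex cone, S ⊆ interior(C) a nonempty compact set, and K ⊆ E a compact set. Then there exists n ∈ ℕ such that for all real t ≥ n, the set t • S + K is contained in the interior of C. -/

import Mathlib

open scoped Pointwise

lemma smul_mem_interior_cone {E : Type*} [NormedAddCommGroup E] [NormedSpace ℝ E]
    (C : ConvexCone ℝ E) {t : ℝ} (ht : 0 < t) {x : E}
    (hx : x ∈ interior (C : Set E)) : t • x ∈ interior (C : Set E) := by
  have hsub : t • interior (C : Set E) ⊆ (C : Set E) := by
    rintro y ⟨z, hz, rfl⟩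
    exact C.smul_mem ht (interior_subset hz)
  have hopen : IsOpen (t • interior (C : Set E)) :=
    isOpen_interior.smul₀ (ne_of_gt ht)
  exact interior_maximal hsub hopen ⟨x, hx, rfl⟩

/-- If `C` is a closed convex cone in a finite-dimensional real normed space,
`S ⊆ interior C` is nonempty compact and `K` is compact, then for all sufficiently
large `t` the set `t • S + K` is contained in the interior of `C`. -/
theorem stmt_8 {E : Type*} [NormedAddCommGroup E] [NormedSpace ℝ E]
    [FiniteDimensional ℝ E]
    (C : ConvexCone ℝ E) (hCcl : IsClosed (C : Set E))
    (S : Set E) (hS : S ⊆ interior (C : Set E)) (hSne : S.Nonempty)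
    (hScomp : IsCompact S) (K : Set E) (hK : IsCompact K) :
    ∃ n : ℕ, ∀ t : ℝ, (n : ℝ) ≤ t → t • S + K ⊆ interior (C : Set E) := by
  obtain ⟨δ, hδ, hthick⟩ :=
    hScomp.exists_thickening_subset_open isOpen_interior hS
  obtain ⟨r, hr⟩ := hK.isBounded.subset_ball 0
  refine ⟨⌈r / δ⌉₊ + 1, ?_⟩
  intro t ht
  have ht1 : (1 : ℝ) ≤ t := by
    have : ((⌈r / δ⌉₊ : ℝ) + 1) ≤ t := by push_cast at ht ⊢; linarith
    nlinarith [Nat.cast_nonneg (α := ℝ) ⌈r / δ⌉₊]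
  have ht0 : 0 < t := lt_of_lt_of_le one_pos ht1
  have htr : r < t * δ := by
    have h1 : r / δ ≤ (⌈r / δ⌉₊ : ℝ) := Nat.le_ceil _
    have h2 : (⌈r / δ⌉₊ : ℝ) + 1 ≤ t := by push_cast at ht ⊢; linarith
    have : r / δ < t := by linarith
    calc r = (r / δ) * δ := by field_simp
    _ < t * δ := by exact mul_lt_mul_of_pos_right this hδ
  rintro x ⟨y, ⟨s, hs, rfl⟩, k, hk, rfl⟩
  have hk' : ‖k‖ < r := by simpa using hr hk
  have key : s + t⁻¹ • k ∈ interior (C : Set E) := by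
    apply hthick
    rw [Metric.mem_thickening_iff]
    refine ⟨s, hs, ?_⟩
    rw [dist_eq_norm]
    simp only [add_sub_cancel_left, norm_smul, norm_inv, Real.norm_eq_abs,
      abs_of_pos ht0]
    rw [inv_mul_lt_iff₀ ht0]
    linarith
  have : t • (s + t⁻¹ • k) ∈ interior (C : Set E) :=
    smul_mem_interior_cone C ht0 key
  simpa [smul_add, smul_smul, mul_inv_cancel₀ (ne_of_gt ht0)] using this
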